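/- Let k > 0, φ ∈ ℝ, A ∈ ℝ and L > 2π/k. Define f : ℝ → ℝ by f(x) = A·cos(φ + k·x), and assume f(0) ≠ 0 and f(L) ≠ 0. Then the sets Z := {x ∈ (0,L) : f(x) = 0} and W := {x ∈ (0,L) : f'(x) = 0} are finite, each has at least two elements, and 2·(|Z| − |W|) = −( sgn( f(0)·f'(0) ) + sgn( f(L)·(−f'(L)) ) ), where f'(0) and −f'(L) are the derivatives of f at the two endpoints taken in the direction pointing into the interval (0,L). -/

import Mathlib

/-- sgn(x) = 1 if x > 0 and sgn(x) = -1 if x ≤ 0. -/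
noncomputable def sgn (x : ℝ) : ℝ := if 0 < x then 1 else -1

open Real


lemma aux_int_set (x y : ℝ) :
    {n : ℤ | x < (n:ℝ) ∧ (n:ℝ) < y} = ↑(Finset.Ioo ⌊x⌋ ⌈y⌉) := by
  ext n
  simp [Int.floor_lt, Int.lt_ceil, and_comm]


set_option maxHeartbeats 4000000 in
/-- For `f x = A cos (φ + k x)` on an interval of length `L > 2π/k` with nonvanishing
endpoint values, the sets of interior zeros of `f` and of `f'` are finite with at least two
elements each, and twice the difference of their cardinalities equals
`-(sgn (f(0)·f'(0)) + sgn (f(L)·(−f'(L))))`. -/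
theorem stmt_1 (k φ A L : ℝ) (hk : 0 < k) (hL : 2 * Real.pi / k < L)
    (f : ℝ → ℝ) (hf : ∀ x, f x = A * Real.cos (φ + k * x))
    (h0 : f 0 ≠ 0) (hLend : f L ≠ 0) :
    {x ∈ Set.Ioo 0 L | f x = 0}.Finite ∧
    {x ∈ Set.Ioo 0 L | deriv f x = 0}.Finite ∧
    2 ≤ {x ∈ Set.Ioo 0 L | f x = 0}.ncard ∧
    2 ≤ {x ∈ Set.Ioo 0 L | deriv f x = 0}.ncard ∧
    2 * (({x ∈ Set.Ioo 0 L | f x = 0}.ncard : ℝ)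
          - ({x ∈ Set.Ioo 0 L | deriv f x = 0}.ncard : ℝ))
      = -(sgn (f 0 * deriv f 0) + sgn (f L * (-(deriv f L)))) := by
  have hπ : (0:ℝ) < π := Real.pi_pos
  have hπ' : (π:ℝ) ≠ 0 := ne_of_gt hπ
  have hk' : k ≠ 0 := ne_of_gt hk
  have hfe : f = fun x => A * Real.cos (φ + k * x) := funext hf
  have hA : A ≠ 0 := by
    intro h; apply h0; rw [hf]; simp [h]
  have hca : Real.cos φ ≠ 0 := by
    intro h; apply h0; rw [hf]; simp [h]
  have hcb : Real.cos (φ + k * L) ≠ 0 := by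
    intro h; apply hLend; rw [hf, h, mul_zero]
  have hderiv : ∀ x, deriv f x = -(A*k) * Real.sin (φ + k * x) := by
    intro x
    have h1 : HasDerivAt (fun x : ℝ => φ + k * x) k x := by
      simpa using ((hasDerivAt_id x).const_mul k).const_add φ
    have h2 : HasDerivAt (fun x => Real.cos (φ + k * x)) (-Real.sin (φ + k*x) * k) x :=
      (Real.hasDerivAt_cos _).comp x h1
    have h3 := h2.const_mul A
    rw [hfe, h3.deriv]; ring
  have hkL : 2 * π < k * L := by
    rw [div_lt_iff₀ hk] at hL; linarith
  -- the two sets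
  have hZset : {x ∈ Set.Ioo 0 L | f x = 0}
      = (fun n : ℤ => ((2*n+1)*π/2 - φ)/k) ''
        {n : ℤ | φ/π - 1/2 < (n:ℝ) ∧ (n:ℝ) < (φ + k*L)/π - 1/2} := by
    ext x
    simp only [Set.mem_setOf_eq, Set.mem_Ioo, Set.mem_image, hf]
    constructor
    · rintro ⟨⟨hx0, hxL⟩, hcos⟩
      have hc : Real.cos (φ + k*x) = 0 := by
        rcases mul_eq_zero.1 hcos with h | h
        · exact absurd h hA
        · exact h
      obtain ⟨n, hn⟩ := Real.cos_eq_zero_iff.1 hc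
      have hx : x = ((2*n+1)*π/2 - φ)/k := by
        field_simp; linarith [hn]
      refine ⟨n, ⟨?_, ?_⟩, hx.symm⟩
      · have h1 : φ < (2*(n:ℝ)+1)*π/2 := by nlinarith [hn]
        have h2 : φ/π * π = φ := div_mul_cancel₀ φ hπ'
        nlinarith
      · have h1 : (2*(n:ℝ)+1)*π/2 < φ + k*L := by nlinarith [hn]
        have h2 : (φ + k*L)/π * π = φ + k*L := div_mul_cancel₀ _ hπ'
        nlinarith
    · rintro ⟨n, ⟨hn1, hn2⟩, rfl⟩
      have h2 : φ/π * π = φ := div_mul_cancel₀ φ hπ'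
      have h3 : (φ + k*L)/π * π = φ + k*L := div_mul_cancel₀ _ hπ'
      have h1 : φ < (2*(n:ℝ)+1)*π/2 := by nlinarith
      have h4 : (2*(n:ℝ)+1)*π/2 < φ + k*L := by nlinarith
      refine ⟨⟨div_pos (by linarith) hk, ?_⟩, ?_⟩
      · rw [div_lt_iff₀ hk]; linarith
      · have : φ + k * (((2*(n:ℝ)+1)*π/2 - φ)/k) = (2*n+1)*π/2 := by
          field_simp; ring
        rw [this]
        rw [Real.cos_eq_zero_iff.2 ⟨n, rfl⟩, mul_zero]
  have hWset : {x ∈ Set.Ioo 0 L | deriv f x = 0}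
      = (fun n : ℤ => ((n:ℝ)*π - φ)/k) ''
        {n : ℤ | φ/π < (n:ℝ) ∧ (n:ℝ) < (φ + k*L)/π} := by
    ext x
    simp only [Set.mem_setOf_eq, Set.mem_Ioo, Set.mem_image, hderiv]
    constructor
    · rintro ⟨⟨hx0, hxL⟩, hsin⟩
      have hAk : -(A*k) ≠ 0 := by
        simp [hA, hk']
      have hs : Real.sin (φ + k*x) = 0 := by
        rcases mul_eq_zero.1 hsin with h | h
        · exact absurd h hAk
        · exact h
      obtain ⟨n, hn⟩ := Real.sin_eq_zero_iff.1 hs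
      have hx : x = ((n:ℝ)*π - φ)/k := by
        field_simp; linarith [hn]
      refine ⟨n, ⟨?_, ?_⟩, hx.symm⟩
      · have h1 : φ < (n:ℝ)*π := by nlinarith [hn]
        have h2 : φ/π * π = φ := div_mul_cancel₀ φ hπ'
        nlinarith
      · have h1 : (n:ℝ)*π < φ + k*L := by nlinarith [hn]
        have h2 : (φ + k*L)/π * π = φ + k*L := div_mul_cancel₀ _ hπ'
        nlinarith
    · rintro ⟨n, ⟨hn1, hn2⟩, rfl⟩
      have h2 : φ/π * π = φ := div_mul_cancel₀ φ hπ'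
      have h3 : (φ + k*L)/π * π = φ + k*L := div_mul_cancel₀ _ hπ'
      have h1 : φ < (n:ℝ)*π := by nlinarith
      have h4 : (n:ℝ)*π < φ + k*L := by nlinarith
      refine ⟨⟨div_pos (by linarith) hk, ?_⟩, ?_⟩
      · rw [div_lt_iff₀ hk]; linarith
      · have : φ + k * (((n:ℝ)*π - φ)/k) = (n:ℝ)*π := by
          field_simp; ring
        rw [this, Real.sin_eq_zero_iff.2 ⟨n, rfl⟩, mul_zero]
  -- injectivity of the parametrizations
  have hinjZ : Function.Injective (fun n : ℤ => ((2*(n:ℝ)+1)*π/2 - φ)/k) := by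
    intro m n h
    simp only at h
    field_simp at h
    have h' : ((m:ℝ) - n) * π = 0 := by linear_combination h/2
    exact_mod_cast sub_eq_zero.1 ((mul_eq_zero.1 h').resolve_right hπ')
  have hinjW : Function.Injective (fun n : ℤ => ((n:ℝ)*π - φ)/k) := by
    intro m n h
    simp only at h
    field_simp at h
    have h' : ((m:ℝ) - n) * π = 0 := by linear_combination h
    exact_mod_cast sub_eq_zero.1 ((mul_eq_zero.1 h').resolve_right hπ')
  have hZcard : {x ∈ Set.Ioo 0 L | f x = 0}.ncard
      = (⌈(φ + k*L)/π - 1/2⌉ - ⌊φ/π - 1/2⌋ - 1).toNat := by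
    rw [hZset, Set.ncard_image_of_injective _ hinjZ, aux_int_set,
      Set.ncard_coe_finset, Int.card_Ioo]
  have hWcard : {x ∈ Set.Ioo 0 L | deriv f x = 0}.ncard
      = (⌈(φ + k*L)/π⌉ - ⌊φ/π⌋ - 1).toNat := by
    rw [hWset, Set.ncard_image_of_injective _ hinjW, aux_int_set,
      Set.ncard_coe_finset, Int.card_Ioo]
  have hZfin : {x ∈ Set.Ioo 0 L | f x = 0}.Finite := by
    rw [hZset, aux_int_set]
    exact (Finset.finite_toSet _).image _
  have hWfin : {x ∈ Set.Ioo 0 L | deriv f x = 0}.Finite := by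
    rw [hWset, aux_int_set]
    exact (Finset.finite_toSet _).image _
  -- lower bounds on the integer counts
  have hgap : (2:ℝ) < k*L/π := by
    rw [lt_div_iff₀ hπ]; linarith
  have hZint : (2:ℤ) ≤ ⌈(φ + k*L)/π - 1/2⌉ - ⌊φ/π - 1/2⌋ - 1 := by
    have h1 : (⌊φ/π - 1/2⌋ : ℝ) ≤ φ/π - 1/2 := Int.floor_le _
    have h2 : ((φ + k*L)/π - 1/2 : ℝ) ≤ ⌈(φ + k*L)/π - 1/2⌉ := Int.le_ceil _
    have h3 : (φ + k*L)/π = φ/π + k*L/π := by ring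
    have h4 : ((⌊φ/π - 1/2⌋ : ℤ) : ℝ) + 2 < ((⌈(φ + k*L)/π - 1/2⌉ : ℤ) : ℝ) := by
      push_cast; linarith
    have h5 : (⌊φ/π - 1/2⌋ : ℤ) + 2 < ⌈(φ + k*L)/π - 1/2⌉ := by exact_mod_cast h4
    omega
  have hWint : (2:ℤ) ≤ ⌈(φ + k*L)/π⌉ - ⌊φ/π⌋ - 1 := by
    have h1 : (⌊φ/π⌋ : ℝ) ≤ φ/π := Int.floor_le _
    have h2 : ((φ + k*L)/π : ℝ) ≤ ⌈(φ + k*L)/π⌉ := Int.le_ceil _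
    have h3 : (φ + k*L)/π = φ/π + k*L/π := by ring
    have h4 : ((⌊φ/π⌋ : ℤ) : ℝ) + 2 < ((⌈(φ + k*L)/π⌉ : ℤ) : ℝ) := by
      push_cast; linarith
    have h5 : (⌊φ/π⌋ : ℤ) + 2 < ⌈(φ + k*L)/π⌉ := by exact_mod_cast h4
    omega
  refine ⟨hZfin, hWfin, ?_, ?_, ?_⟩
  · rw [hZcard]; omega
  · rw [hWcard]; omega
  · -- main identity
    rw [hZcard, hWcard]
    have hcast : ∀ m : ℤ, 2 ≤ m → ((m.toNat : ℕ) : ℝ) = (m : ℝ) := by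
      intro m hm
      have h : (m.toNat : ℤ) = m := Int.toNat_of_nonneg (by omega)
      exact_mod_cast congrArg (fun z : ℤ => (z : ℝ)) h
    rw [hcast _ hZint, hcast _ hWint]
    set P := ⌊φ/π⌋ with hP
    set Q := ⌈(φ + k*L)/π⌉ with hQ
    set t := φ/π - P with ht
    set s := (φ + k*L)/π - Q + 1 with hs
    clear_value t s
    have ht0 : 0 ≤ t := by
      rw [ht]; have := Int.floor_le (φ/π); linarith
    have ht1 : t < 1 := by
      rw [ht]; have := Int.lt_floor_add_one (φ/π); linarith
    have hs0 : 0 < s := by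
      rw [hs]; have := Int.ceil_lt_add_one ((φ + k*L)/π); linarith
    have hs1 : s ≤ 1 := by
      rw [hs]; have := Int.le_ceil ((φ + k*L)/π); linarith
    have hφeq : φ = ((P:ℝ) + t) * π := by
      rw [ht]; field_simp; ring
    have hbeq : φ + k*L = ((Q:ℝ) - 1 + s) * π := by
      rw [hs]; field_simp; ring
    have hxeq : φ/π = (P:ℝ) + t := by rw [ht]; ring
    have hyeq : (φ + k*L)/π = (Q:ℝ) - 1 + s := by rw [hs]; ring
    have htne : t ≠ 1/2 := by
      intro h
      exact hca (Real.cos_eq_zero_iff.2 ⟨P, by rw [hφeq, h]; ring⟩)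
    have hsne : s ≠ 1/2 := by
      intro h
      exact hcb (Real.cos_eq_zero_iff.2 ⟨Q - 1, by rw [hbeq, h]; push_cast; ring⟩)
    have hA2 : 0 < A^2 := by positivity
    have sin2a : Real.sin (2*φ) = Real.sin (2*π*t) := by
      have h1 : 2*φ = 2*π*t + (P:ℤ) * (2*π) := by rw [hφeq]; push_cast; ring
      rw [h1, Real.sin_add_int_mul_two_pi]
    have sin2b : Real.sin (2*(φ + k*L)) = Real.sin (2*π*s) := by
      have h1 : 2*(φ + k*L) = 2*π*s + ((Q - 1 : ℤ)) * (2*π) := by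
        rw [hbeq]; push_cast; ring
      rw [h1, Real.sin_add_int_mul_two_pi]
    have prod0 : f 0 * deriv f 0 = -(A^2*k/2) * Real.sin (2*φ) := by
      rw [hf 0, hderiv 0, mul_zero, add_zero, Real.sin_two_mul]; ring
    have prodL : f L * (-(deriv f L)) = (A^2*k/2) * Real.sin (2*(φ + k*L)) := by
      rw [hf L, hderiv L, Real.sin_two_mul]; ring
    rw [prod0, prodL, sin2a, sin2b]
    clear hZset hWset hinjZ hinjW hZcard hWcard hZfin hWfin hf hfe h0 hLend hca
      hcb hderiv prod0 prodL sin2a sin2b hφeq hbeq hZint hWint hgap hkL hcast hL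
      hP hQ ht hs f hA hk' hπ'
    rcases lt_or_gt_of_ne htne with htc | htc <;>
      rcases lt_or_gt_of_ne hsne with hsc | hsc
    · -- t < 1/2, s < 1/2
      have hfl : ⌊φ/π - 1/2⌋ = P - 1 := by
        refine Int.floor_eq_iff.2 ⟨?_, ?_⟩ <;> rw [hxeq] <;> push_cast <;> linarith
      have hcl : ⌈(φ + k*L)/π - 1/2⌉ = Q - 1 := by
        refine Int.ceil_eq_iff.2 ⟨?_, ?_⟩ <;> rw [hyeq] <;> push_cast <;> linarith
      have hsin1 : 0 ≤ Real.sin (2*π*t) :=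
        Real.sin_nonneg_of_nonneg_of_le_pi
          (by nlinarith [mul_nonneg hπ.le ht0])
          (by nlinarith [mul_nonneg hπ.le (show (0:ℝ) ≤ 1 - 2*t by linarith)])
      have hsin2 : 0 < Real.sin (2*π*s) :=
        Real.sin_pos_of_pos_of_lt_pi
          (by nlinarith [mul_pos hπ hs0])
          (by nlinarith [mul_pos hπ (show (0:ℝ) < 1 - 2*s by linarith)])
      have hg1 : sgn (-(A^2*k/2) * Real.sin (2*π*t)) = -1 := by
        rw [sgn, if_neg]; push_neg; nlinarith [mul_nonneg (mul_pos hA2 hk).le hsin1]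
      have hg2 : sgn ((A^2*k/2) * Real.sin (2*π*s)) = 1 := by
        rw [sgn, if_pos]; nlinarith [mul_pos (mul_pos hA2 hk) hsin2]
      rw [hfl, hcl, hg1, hg2]; push_cast; ring
    · -- t < 1/2, s > 1/2
      have hfl : ⌊φ/π - 1/2⌋ = P - 1 := by
        refine Int.floor_eq_iff.2 ⟨?_, ?_⟩ <;> rw [hxeq] <;> push_cast <;> linarith
      have hcl : ⌈(φ + k*L)/π - 1/2⌉ = Q := by
        refine Int.ceil_eq_iff.2 ⟨?_, ?_⟩ <;> rw [hyeq] <;> push_cast <;> linarith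
      have hsin1 : 0 ≤ Real.sin (2*π*t) :=
        Real.sin_nonneg_of_nonneg_of_le_pi
          (by nlinarith [mul_nonneg hπ.le ht0])
          (by nlinarith [mul_nonneg hπ.le (show (0:ℝ) ≤ 1 - 2*t by linarith)])
      have hsin2 : Real.sin (2*π*s) ≤ 0 := by
        have h1 : Real.sin (2*π*s) = Real.sin (2*π*s - 2*π) := (Real.sin_sub_two_pi _).symm
        have h2 : 2*π*s - 2*π = -(2*π - 2*π*s) := by ring
        have h3 : 0 ≤ Real.sin (2*π - 2*π*s) :=
          Real.sin_nonneg_of_nonneg_of_le_pi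
            (by nlinarith [mul_nonneg hπ.le (show (0:ℝ) ≤ 1 - s by linarith)])
            (by nlinarith [mul_nonneg hπ.le (show (0:ℝ) ≤ 2*s - 1 by linarith)])
        rw [h1, h2, Real.sin_neg]; linarith
      have hg1 : sgn (-(A^2*k/2) * Real.sin (2*π*t)) = -1 := by
        rw [sgn, if_neg]; push_neg; nlinarith [mul_nonneg (mul_pos hA2 hk).le hsin1]
      have hg2 : sgn ((A^2*k/2) * Real.sin (2*π*s)) = -1 := by
        rw [sgn, if_neg]; push_neg; nlinarith [mul_nonneg (mul_pos hA2 hk).le (neg_nonneg.2 hsin2)]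
      rw [hfl, hcl, hg1, hg2]; push_cast; ring
    · -- t > 1/2, s < 1/2
      have hfl : ⌊φ/π - 1/2⌋ = P := by
        refine Int.floor_eq_iff.2 ⟨?_, ?_⟩ <;> rw [hxeq] <;> push_cast <;> linarith
      have hcl : ⌈(φ + k*L)/π - 1/2⌉ = Q - 1 := by
        refine Int.ceil_eq_iff.2 ⟨?_, ?_⟩ <;> rw [hyeq] <;> push_cast <;> linarith
      have hsin1 : Real.sin (2*π*t) < 0 := by
        have h1 : Real.sin (2*π*t) = Real.sin (2*π*t - 2*π) := (Real.sin_sub_two_pi _).symm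
        rw [h1]
        exact Real.sin_neg_of_neg_of_neg_pi_lt
          (by nlinarith [mul_pos hπ (show (0:ℝ) < 1 - t by linarith)])
          (by nlinarith [mul_pos hπ (show (0:ℝ) < 2*t - 1 by linarith)])
      have hsin2 : 0 < Real.sin (2*π*s) :=
        Real.sin_pos_of_pos_of_lt_pi
          (by nlinarith [mul_pos hπ hs0])
          (by nlinarith [mul_pos hπ (show (0:ℝ) < 1 - 2*s by linarith)])
      have hg1 : sgn (-(A^2*k/2) * Real.sin (2*π*t)) = 1 := by
        rw [sgn, if_pos]; nlinarith [mul_pos (mul_pos hA2 hk) (neg_pos.2 hsin1)]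
      have hg2 : sgn ((A^2*k/2) * Real.sin (2*π*s)) = 1 := by
        rw [sgn, if_pos]; nlinarith [mul_pos (mul_pos hA2 hk) hsin2]
      rw [hfl, hcl, hg1, hg2]; push_cast; ring
    · -- t > 1/2, s > 1/2
      have hfl : ⌊φ/π - 1/2⌋ = P := by
        refine Int.floor_eq_iff.2 ⟨?_, ?_⟩ <;> rw [hxeq] <;> push_cast <;> linarith
      have hcl : ⌈(φ + k*L)/π - 1/2⌉ = Q := by
        refine Int.ceil_eq_iff.2 ⟨?_, ?_⟩ <;> rw [hyeq] <;> push_cast <;> linarith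
      have hsin1 : Real.sin (2*π*t) < 0 := by
        have h1 : Real.sin (2*π*t) = Real.sin (2*π*t - 2*π) := (Real.sin_sub_two_pi _).symm
        rw [h1]
        exact Real.sin_neg_of_neg_of_neg_pi_lt
          (by nlinarith [mul_pos hπ (show (0:ℝ) < 1 - t by linarith)])
          (by nlinarith [mul_pos hπ (show (0:ℝ) < 2*t - 1 by linarith)])
      have hsin2 : Real.sin (2*π*s) ≤ 0 := by
        have h1 : Real.sin (2*π*s) = Real.sin (2*π*s - 2*π) := (Real.sin_sub_two_pi _).symm
        have h2 : 2*π*s - 2*π = -(2*π - 2*π*s) := by ring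
        have h3 : 0 ≤ Real.sin (2*π - 2*π*s) :=
          Real.sin_nonneg_of_nonneg_of_le_pi
            (by nlinarith [mul_nonneg hπ.le (show (0:ℝ) ≤ 1 - s by linarith)])
            (by nlinarith [mul_nonneg hπ.le (show (0:ℝ) ≤ 2*s - 1 by linarith)])
        rw [h1, h2, Real.sin_neg]; linarith
      have hg1 : sgn (-(A^2*k/2) * Real.sin (2*π*t)) = 1 := by
        rw [sgn, if_pos]; nlinarith [mul_pos (mul_pos hA2 hk) (neg_pos.2 hsin1)]
      have hg2 : sgn ((A^2*k/2) * Real.sin (2*π*s)) = -1 := by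
        rw [sgn, if_neg]; push_neg; nlinarith [mul_nonneg (mul_pos hA2 hk).le (neg_nonneg.2 hsin2)]
      rw [hfl, hcl, hg1, hg2]; push_cast; ring
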